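/- arXiv:2003.06569 — 3 statements merged into one kernel-verified Lean document; each statement's English description precedes it below -/
import Mathlib

section
/- Let f, g be nonconstant polynomials in n ≥ 2 variables with f(0)=g(0)=0, let Γ(f/g) := Γ(f·g) be their joint Newton polyhedron, and let (t₀,…,t₀) be the unique intersection point of the diagonal D = {(t,…,t) : t ∈ ℝ} with the boundary of Γ(f/g). Then for every a ∈ ℝ₊^n one has σ(a) − (d(a,Γ(f)) + d(a,Γ(g)))·(1/t₀) ≥ 0, where σ(a) = a₁+…+a_n, with equality if and only if τ₀ ⊆ F(a, Γ(f/g)), where τ₀ is the smallest face of Γ(f/g) containing (t₀,…,t₀). -/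
open Finset Pointwise

variable {n : ℕ}

/-- The pairing `⟨k,x⟩ = ∑ i, k i * x i`. -/
noncomputable def dotp (k x : Fin n → ℝ) : ℝ := ∑ i, k i * x i

/-- Convex hull of the union of translated positive orthants `m + ℝ₊ⁿ`. -/
def orthHull (S : Set (Fin n → ℝ)) : Set (Fin n → ℝ) :=
  convexHull ℝ (⋃ m ∈ S, {x : Fin n → ℝ | ∀ i, m i ≤ x i})

/-- `Γ` is a Newton polyhedron: the convex hull of `⋃_{m ∈ supp} (m + ℝ₊ⁿ)`
for a nonempty finite set of lattice points (the support of a polynomial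
vanishing at the origin). -/
def IsNewtonPolyhedron (Γ : Set (Fin n → ℝ)) : Prop :=
  ∃ S : Finset (Fin n → ℕ), S.Nonempty ∧
    Γ = orthHull ((fun m : Fin n → ℕ => fun i => (m i : ℝ)) '' (S : Set (Fin n → ℕ)))

/-- `d(k,Γ) = min_{x ∈ Γ} ⟨k,x⟩`. -/
noncomputable def dval (k : Fin n → ℝ) (Γ : Set (Fin n → ℝ)) : ℝ :=
  sInf ((fun x => dotp k x) '' Γ)

/-- First meet locus `F(k,Γ) = {x ∈ Γ : ⟨k,x⟩ = d(k,Γ)}`. -/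
def fmeet (k : Fin n → ℝ) (Γ : Set (Fin n → ℝ)) : Set (Fin n → ℝ) :=
  {x ∈ Γ | dotp k x = dval k Γ}

/-- `σ(k) = ∑ i, k i`. -/
noncomputable def sigmaS (k : Fin n → ℝ) : ℝ := ∑ i, k i

/-- The smallest face of `Γ` containing a point `p`: the intersection of all
first meet loci (faces) containing `p`. -/
def minFace (Γ : Set (Fin n → ℝ)) (p : Fin n → ℝ) : Set (Fin n → ℝ) :=
  ⋂₀ {F | p ∈ F ∧ ∃ k : Fin n → ℝ, (∀ i, 0 ≤ k i) ∧ F = fmeet k Γ}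

/-- Cast a lattice vector to `ℝⁿ`. -/
def natVec (w : Fin n → ℕ) : Fin n → ℝ := fun i => (w i : ℝ)

/-- `w` is the primitive normal vector of a facet (face of dimension `n-1`) of `Γ`. -/
def IsPrimFacetNormal (Γ : Set (Fin n → ℝ)) (w : Fin n → ℕ) : Prop :=
  w ≠ 0 ∧ Finset.univ.gcd w = 1 ∧
    Module.finrank ℝ (affineSpan ℝ (fmeet (natVec w) Γ)).direction = n - 1

/-- `D(t₀)`: primitive normal vectors of the facets of `Γ` containing the
smallest face through the diagonal point `p = (t₀,…,t₀)`. -/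
def Dset (Γ : Set (Fin n → ℝ)) (p : Fin n → ℝ) : Set (Fin n → ℕ) :=
  {w | IsPrimFacetNormal Γ w ∧ minFace Γ p ⊆ fmeet (natVec w) Γ}


/-- The nonnegative orthant. -/
def Opos : Set (Fin n → ℝ) := {x | ∀ i, 0 ≤ x i}

lemma convex_Opos : Convex ℝ (Opos (n := n)) := by
  intro x hx y hy s t hs ht hst i
  exact add_nonneg (mul_nonneg hs (hx i)) (mul_nonneg ht (hy i))

lemma isClosed_Opos : IsClosed (Opos (n := n)) := by
  have : (Opos (n := n)) = ⋂ i, {x | 0 ≤ x i} := by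
    ext x; simp [Opos, Set.mem_iInter]
  rw [this]
  exact isClosed_iInter fun i => isClosed_le continuous_const (continuous_apply i)

lemma Opos_add_Opos : (Opos (n := n)) + Opos = Opos := by
  ext x
  constructor
  · rintro ⟨y, hy, z, hz, rfl⟩ i
    exact add_nonneg (hy i) (hz i)
  · intro hx
    exact ⟨x, hx, 0, fun i => le_refl 0, by simp⟩

lemma orthHull_eq (S : Set (Fin n → ℝ)) :
    orthHull S = convexHull ℝ S + Opos := by
  have h1 : (⋃ m ∈ S, {x : Fin n → ℝ | ∀ i, m i ≤ x i}) = S + Opos := by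
    ext x
    simp only [Set.mem_iUnion, Set.mem_add]
    constructor
    · rintro ⟨m, hm, hx⟩
      exact ⟨m, hm, x - m, fun i => by simpa using hx i, by abel⟩
    · rintro ⟨m, hm, z, hz, rfl⟩ 
      exact ⟨m, hm, fun i => le_add_of_nonneg_right (hz i)⟩
  rw [orthHull, h1, convexHull_add, convex_Opos.convexHull_eq]

/-- Structure of a Newton polyhedron: compact nonempty base plus orthant. -/
lemma newton_struct {Γ : Set (Fin n → ℝ)} (h : IsNewtonPolyhedron Γ) :
    ∃ C : Set (Fin n → ℝ), IsCompact C ∧ C.Nonempty ∧ C ⊆ Opos ∧ Γ = C + Opos := by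
  obtain ⟨S, hS, rfl⟩ := h
  set V : Set (Fin n → ℝ) := (fun m : Fin n → ℕ => fun i => (m i : ℝ)) '' (S : Set (Fin n → ℕ))
  refine ⟨convexHull ℝ V, ?_, ?_, ?_, orthHull_eq V⟩
  · exact Set.Finite.isCompact_convexHull (𝕜 := ℝ) ((S.finite_toSet).image _)
  · exact ((hS.to_set).image _).mono (subset_convexHull ℝ V)
  · refine convexHull_min ?_ convex_Opos
    rintro x ⟨m, _, rfl⟩ i
    exact Nat.cast_nonneg _
  
lemma dotp_add (a x y : Fin n → ℝ) : dotp a (x + y) = dotp a x + dotp a y := by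
  simp [dotp, mul_add, Finset.sum_add_distrib]

lemma dotp_nonneg {a x : Fin n → ℝ} (ha : ∀ i, 0 ≤ a i) (hx : x ∈ Opos) :
    0 ≤ dotp a x :=
  Finset.sum_nonneg fun i _ => mul_nonneg (ha i) (hx i)

lemma sInf_set_add {s t : Set ℝ} (hs : s.Nonempty) (ht : t.Nonempty)
    (bs : BddBelow s) (bt : BddBelow t) : sInf (s + t) = sInf s + sInf t := by
  refine le_antisymm ?_ ?_
  · refine le_of_forall_pos_le_add fun ε hε => ?_
    obtain ⟨x, hx, hxlt⟩ := Real.lt_sInf_add_pos hs (half_pos hε)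
    obtain ⟨y, hy, hylt⟩ := Real.lt_sInf_add_pos ht (half_pos hε)
    calc sInf (s + t) ≤ x + y := csInf_le (bs.add bt) ⟨x, hx, y, hy, rfl⟩
      _ ≤ sInf s + sInf t + ε := by linarith
  · refine le_csInf (hs.add ht) ?_
    rintro b ⟨x, hx, y, hy, rfl⟩
    exact add_le_add (csInf_le bs hx) (csInf_le bt hy)

lemma dval_sum {a : Fin n → ℝ} (ha : ∀ i, 0 ≤ a i) {A B : Set (Fin n → ℝ)}
    (hA : A.Nonempty) (hB : B.Nonempty) (hA0 : A ⊆ Opos) (hB0 : B ⊆ Opos) :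
    dval a (A + B) = dval a A + dval a B := by
  have himg : (fun x => dotp a x) '' (A + B)
      = (fun x => dotp a x) '' A + (fun x => dotp a x) '' B := by
    ext y
    constructor
    · rintro ⟨x, ⟨u, hu, v, hv, rfl⟩, rfl⟩
      exact ⟨dotp a u, ⟨u, hu, rfl⟩, dotp a v, ⟨v, hv, rfl⟩, (dotp_add a u v).symm⟩
    · rintro ⟨_, ⟨u, hu, rfl⟩, _, ⟨v, hv, rfl⟩, rfl⟩
      exact ⟨u + v, ⟨u, hu, v, hv, rfl⟩, dotp_add a u v⟩
  rw [dval, dval, dval, himg]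
  exact sInf_set_add (hA.image _) (hB.image _)
    ⟨0, by rintro _ ⟨x, hx, rfl⟩; exact dotp_nonneg ha (hA0 hx)⟩
    ⟨0, by rintro _ ⟨x, hx, rfl⟩; exact dotp_nonneg ha (hB0 hx)⟩

/-- with `(t₀,…,t₀)` the intersection point of the diagonal with the
boundary of `Γ(f/g) = Γ(f) + Γ(g)`, for every `a ∈ ℝ₊ⁿ` one has
`σ(a) − (d(a,Γ(f)) + d(a,Γ(g)))·(1/t₀) ≥ 0`, with equality iff the smallest face
`τ₀` of `Γ(f/g)` through the diagonal point is contained in `F(a, Γ(f/g))`. -/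
theorem diagonal_inequality_and_equality_condition
    (hn : 2 ≤ n)
    (Γf Γg : Set (Fin n → ℝ))
    (hΓf : IsNewtonPolyhedron Γf) (hΓg : IsNewtonPolyhedron Γg)
    (t₀ : ℝ) (ht₀ : 0 < t₀)
    (hdiag : (fun _ : Fin n => t₀) ∈ frontier (Γf + Γg)) :
    ∀ a : Fin n → ℝ, (∀ i, 0 ≤ a i) →
      0 ≤ sigmaS a - (dval a Γf + dval a Γg) * (1 / t₀) ∧
      (sigmaS a - (dval a Γf + dval a Γg) * (1 / t₀) = 0 ↔
        minFace (Γf + Γg) (fun _ => t₀) ⊆ fmeet a (Γf + Γg)) := by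
  intro a ha
  obtain ⟨Cf, hCfc, hCfne, hCf0, hfeq⟩ := newton_struct hΓf
  obtain ⟨Cg, hCgc, hCgne, hCg0, hgeq⟩ := newton_struct hΓg
  -- basic facts about Γf, Γg
  have hfne : Γf.Nonempty := by
    rw [hfeq]; exact hCfne.add ⟨0, fun i => le_refl 0⟩
  have hgne : Γg.Nonempty := by
    rw [hgeq]; exact hCgne.add ⟨0, fun i => le_refl 0⟩
  have hf0 : Γf ⊆ Opos := by
    rw [hfeq]
    calc Cf + (Opos : Set (Fin n → ℝ)) ⊆ Opos + Opos := Set.add_subset_add_right hCf0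
      _ = Opos := Opos_add_Opos
  have hg0 : Γg ⊆ Opos := by
    rw [hgeq]
    calc Cg + (Opos : Set (Fin n → ℝ)) ⊆ Opos + Opos := Set.add_subset_add_right hCg0
      _ = Opos := Opos_add_Opos
  have hΓ0 : Γf + Γg ⊆ Opos := by
    calc Γf + Γg ⊆ Opos + Opos := Set.add_subset_add hf0 hg0
      _ = Opos := Opos_add_Opos
  -- Γf + Γg is closed
  have hclosed : IsClosed (Γf + Γg) := by
    have : Γf + Γg = (Cf + Cg) + Opos := by
      rw [hfeq, hgeq, add_add_add_comm Cf Opos Cg Opos, Opos_add_Opos]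
    rw [this]
    exact IsClosed.add_left_of_isCompact isClosed_Opos (hCfc.add hCgc)
  set p : Fin n → ℝ := fun _ => t₀ with hp
  have hpΓ : p ∈ Γf + Γg := by
    have := frontier_subset_closure hdiag
    rwa [hclosed.closure_eq] at this
  -- bounded below
  have hbdd : BddBelow ((fun x => dotp a x) '' (Γf + Γg)) := by
    refine ⟨0, ?_⟩
    rintro _ ⟨x, hx, rfl⟩
    exact dotp_nonneg ha (hΓ0 hx)
  have hkey : dval a (Γf + Γg) ≤ dotp a p :=
    csInf_le hbdd ⟨p, hpΓ, rfl⟩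
  have hdp : dotp a p = sigmaS a * t₀ := by
    simp [dotp, sigmaS, hp, Finset.sum_mul]
  have hdsum : dval a Γf + dval a Γg = dval a (Γf + Γg) :=
    (dval_sum ha hfne hgne hf0 hg0).symm
  have ht₀' : (t₀ : ℝ) ≠ 0 := ne_of_gt ht₀
  have hexpr : sigmaS a - (dval a Γf + dval a Γg) * (1 / t₀)
      = (dotp a p - dval a (Γf + Γg)) / t₀ := by
    rw [hdsum, hdp]
    field_simp
  constructor
  · rw [hexpr]
    exact div_nonneg (sub_nonneg.2 hkey) ht₀.le
  · rw [hexpr]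
    have heq : (dotp a p - dval a (Γf + Γg)) / t₀ = 0 ↔
        dotp a p = dval a (Γf + Γg) := by
      rw [div_eq_zero_iff, sub_eq_zero]
      simp [ht₀']
    rw [heq]
    constructor
    · intro h
      exact Set.sInter_subset_of_mem ⟨⟨hpΓ, h⟩, a, ha, rfl⟩
    · intro hsub
      have hpmin : p ∈ minFace (Γf + Γg) p :=
        Set.mem_sInter.2 fun F hF => hF.1
      exact (hsub hpmin).2
end

section
/- Let Γ(f), Γ(g) be Newton polyhedra in ℝ₊^n and let (t₀,…,t₀) be the diagonal intersection point with ∂Γ(fg). For every w ∈ ℝ₊^n with d(w,Γ(f)) − d(w,Γ(g)) > 0 (i.e. w ∈ T₋), one has −1/t₀ ≥ −σ(w)/(d(w,Γ(f)) + d(w,Γ(g))) ≥ −σ(w)/(d(w,Γ(f)) − d(w,Γ(g))). Consequently every candidate pole of the form −σ(w)/(d(w,Γ(f)) − d(w,Γ(g))) with w ∈ T₋ is at most −1/t₀. -/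
open Finset Pointwise

variable {n : ℕ}

private lemma newton_subset_orthant {Γ : Set (Fin n → ℝ)} (hΓ : IsNewtonPolyhedron Γ) :
    ∀ x ∈ Γ, ∀ i, 0 ≤ x i := by
  obtain ⟨S, hS, rfl⟩ := hΓ
  have hconv : Convex ℝ {x : Fin n → ℝ | ∀ i, 0 ≤ x i} := by
    intro x hx y hy a b ha hb hab i
    exact add_nonneg (mul_nonneg ha (hx i)) (mul_nonneg hb (hy i))
  have := convexHull_min (s := ⋃ m ∈ ((fun m : Fin n → ℕ => fun i => (m i : ℝ)) ''
      (S : Set (Fin n → ℕ))), {x : Fin n → ℝ | ∀ i, m i ≤ x i}) ?_ hconv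
  · exact fun x hx => this hx
  · rintro x hx
    simp only [Set.mem_iUnion] at hx
    obtain ⟨m, hm, hxm⟩ := hx
    obtain ⟨m', _, rfl⟩ := hm
    intro i
    exact le_trans (Nat.cast_nonneg _) (hxm i)

private lemma newton_nonempty {Γ : Set (Fin n → ℝ)} (hΓ : IsNewtonPolyhedron Γ) :
    Γ.Nonempty := by
  obtain ⟨S, ⟨m, hm⟩, rfl⟩ := hΓ
  refine ⟨natVec m, subset_convexHull ℝ _ ?_⟩
  simp only [Set.mem_iUnion]
  exact ⟨natVec m, ⟨m, hm, rfl⟩, fun i => le_refl _⟩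

private lemma dval_le {Γ : Set (Fin n → ℝ)} (hΓ : IsNewtonPolyhedron Γ)
    {w : Fin n → ℝ} (hw : ∀ i, 0 ≤ w i) {x : Fin n → ℝ} (hx : x ∈ Γ) :
    dval w Γ ≤ dotp w x := by
  apply csInf_le
  · refine ⟨0, ?_⟩
    rintro y ⟨z, hz, rfl⟩
    exact Finset.sum_nonneg fun i _ => mul_nonneg (hw i) (newton_subset_orthant hΓ z hz i)
  · exact ⟨x, hx, rfl⟩

private lemma dval_nonneg {Γ : Set (Fin n → ℝ)} (hΓ : IsNewtonPolyhedron Γ)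
    {w : Fin n → ℝ} (hw : ∀ i, 0 ≤ w i) : 0 ≤ dval w Γ := by
  apply le_csInf
  · exact (newton_nonempty hΓ).image _
  · rintro y ⟨z, hz, rfl⟩
    exact Finset.sum_nonneg fun i _ => mul_nonneg (hw i) (newton_subset_orthant hΓ z hz i)

/-- for every `w ∈ ℝ₊ⁿ` with `d(w,Γ(f)) − d(w,Γ(g)) > 0` (i.e. `w ∈ T₋`),
`−1/t₀ ≥ −σ(w)/(d(w,Γ(f)) + d(w,Γ(g))) ≥ −σ(w)/(d(w,Γ(f)) − d(w,Γ(g)))`;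
consequently every negative candidate pole is at most `−1/t₀`. -/
theorem negative_candidate_poles_bounded_by_diagonal
    (hn : 2 ≤ n)
    (Γf Γg : Set (Fin n → ℝ))
    (hΓf : IsNewtonPolyhedron Γf) (hΓg : IsNewtonPolyhedron Γg)
    (t₀ : ℝ) (ht₀ : 0 < t₀)
    (hdiag : (fun _ : Fin n => t₀) ∈ frontier (Γf + Γg)) :
    ∀ w : Fin n → ℝ, (∀ i, 0 ≤ w i) →
      0 < dval w Γf - dval w Γg →
      (-(1 / t₀) ≥ -(sigmaS w) / (dval w Γf + dval w Γg) ∧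
       -(sigmaS w) / (dval w Γf + dval w Γg) ≥ -(sigmaS w) / (dval w Γf - dval w Γg) ∧
       -(sigmaS w) / (dval w Γf - dval w Γg) ≤ -(1 / t₀)) := by
  intro w hw hpos
  set df := dval w Γf with hdf
  set dg := dval w Γg with hdg
  have hdg0 : 0 ≤ dg := dval_nonneg hΓg hw
  have hdf0 : 0 ≤ df := dval_nonneg hΓf hw
  have hsum_pos : 0 < df + dg := by linarith
  -- the key inequality  σ(w) * t₀ ≥ df + dg
  have hkey : df + dg ≤ sigmaS w * t₀ := by
    have hcont : Continuous (fun x : Fin n → ℝ => dotp w x) := by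
      unfold dotp
      exact continuous_finset_sum _ fun i _ => (continuous_const.mul (continuous_apply i))
    have hclosed : IsClosed {x : Fin n → ℝ | df + dg ≤ dotp w x} :=
      isClosed_le continuous_const hcont
    have hsub : Γf + Γg ⊆ {x : Fin n → ℝ | df + dg ≤ dotp w x} := by
      rintro x ⟨a, ha, b, hb, rfl⟩
      have h1 : df ≤ dotp w a := dval_le hΓf hw ha
      have h2 : dg ≤ dotp w b := dval_le hΓg hw hb
      have : dotp w (a + b) = dotp w a + dotp w b := by
        unfold dotp
        rw [← Finset.sum_add_distrib]
        exact Finset.sum_congr rfl fun i _ => by simp [mul_add]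
      simp only [Set.mem_setOf_eq, this]
      linarith
    have hp : (fun _ : Fin n => t₀) ∈ {x : Fin n → ℝ | df + dg ≤ dotp w x} :=
      hclosed.closure_subset_iff.mpr hsub (frontier_subset_closure hdiag)
    have : dotp w (fun _ : Fin n => t₀) = sigmaS w * t₀ := by
      unfold dotp sigmaS
      rw [Finset.sum_mul]
    simp only [Set.mem_setOf_eq, this] at hp
    exact hp
  have hσ : 0 < sigmaS w := by nlinarith
  have hsub_pos : 0 < df - dg := hpos
  have hA : -(1 / t₀) ≥ -(sigmaS w) / (df + dg) := by
    rw [ge_iff_le, neg_div, neg_le_neg_iff, div_le_div_iff₀ ht₀ hsum_pos]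
    linarith
  have hB : -(sigmaS w) / (df + dg) ≥ -(sigmaS w) / (df - dg) := by
    rw [ge_iff_le, neg_div, neg_div, neg_le_neg_iff]
    exact div_le_div_of_nonneg_left hσ.le hsub_pos (by linarith)
  exact ⟨hA, hB, le_trans (le_of_eq rfl) (hB.trans hA)⟩
end

section
/- Suppose for all w in D(t₀) (the set of primitive normal vectors of facets of Γ(fg) containing the smallest face through the diagonal point (t₀,…,t₀)) one has d(w,Γ(f)) ≠ 0 and d(w,Γ(g)) ≠ 0. Then there is no w ∈ T₊ with σ(w)/(d(w,Γ(g)) − d(w,Γ(f))) = 1/t₀, and no w ∈ T₋ with −σ(w)/(d(w,Γ(f)) − d(w,Γ(g))) = −1/t₀. In particular ±1/t₀ are not candidate poles coming from the cones. -/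
open Finset Pointwise

variable {n : ℕ}

namespace NPaux



/-! ### dotp basics -/

lemma dotp_add_right (u x y : Fin n → ℝ) : dotp u (x + y) = dotp u x + dotp u y := by
  simp [dotp, mul_add, Finset.sum_add_distrib]

lemma dotp_sub_right (u x y : Fin n → ℝ) : dotp u (x - y) = dotp u x - dotp u y := by
  simp [dotp, mul_sub, Finset.sum_sub_distrib]

lemma dotp_smul_right (u : Fin n → ℝ) (c : ℝ) (x : Fin n → ℝ) :
    dotp u (c • x) = c * dotp u x := by
  simp only [dotp, Pi.smul_apply, smul_eq_mul, Finset.mul_sum]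
  exact Finset.sum_congr rfl fun i _ => by ring

lemma dotp_smul_left (u : Fin n → ℝ) (c : ℝ) (x : Fin n → ℝ) :
    dotp (c • u) x = c * dotp u x := by
  simp only [dotp, Pi.smul_apply, smul_eq_mul, Finset.mul_sum]
  exact Finset.sum_congr rfl fun i _ => by ring

lemma dotp_comm (u x : Fin n → ℝ) : dotp u x = dotp x u := by
  simp [dotp, mul_comm]

lemma dotp_nonneg {u x : Fin n → ℝ} (hu : ∀ i, 0 ≤ u i) (hx : ∀ i, 0 ≤ x i) :
    0 ≤ dotp u x :=
  Finset.sum_nonneg fun i _ => mul_nonneg (hu i) (hx i)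

lemma dotp_single_right (u : Fin n → ℝ) (i : Fin n) : dotp u (Pi.single i 1) = u i := by
  unfold dotp
  rw [Finset.sum_eq_single i (fun j _ hj => by rw [Pi.single_eq_of_ne hj, mul_zero]) (by simp)]
  simp

lemma dotp_const_right (u : Fin n → ℝ) (t : ℝ) :
    dotp u (fun _ => t) = t * sigmaS u := by
  simp [dotp, sigmaS, Finset.mul_sum, mul_comm]

lemma dotp_coord_zero {u x : Fin n → ℝ} (hu : ∀ i, 0 ≤ u i) (hx : ∀ i, 0 ≤ x i)
    (h : dotp u x = 0) : ∀ i, u i * x i = 0 := by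
  intro i
  have := (Finset.sum_eq_zero_iff_of_nonneg
    (fun j _ => mul_nonneg (hu j) (hx j))).1 h i (Finset.mem_univ i)
  exact this

lemma eq_zero_of_dotp_self {x : Fin n → ℝ} (h : dotp x x = 0) : x = 0 := by
  funext i
  have h2 := (Finset.sum_eq_zero_iff_of_nonneg
    (fun j _ => mul_self_nonneg (x j))).1 h i (Finset.mem_univ i)
  have := mul_self_eq_zero.1 h2
  simpa using this

lemma sigmaS_pos {u : Fin n → ℝ} (hu : ∀ i, 0 ≤ u i) (hne : u ≠ 0) : 0 < sigmaS u := by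
  rcases Function.ne_iff.1 hne with ⟨i, hi⟩
  have hipos : 0 < u i := lt_of_le_of_ne (hu i) (by simpa using (Ne.symm hi))
  have : (0:ℝ) < ∑ j, u j :=
    Finset.sum_pos' (fun j _ => hu j) ⟨i, Finset.mem_univ i, hipos⟩
  simpa [sigmaS] using this

lemma dotp_sum_right (u : Fin n → ℝ) {ι : Type*} (s : Finset ι) (f : ι → Fin n → ℝ) :
    dotp u (∑ m ∈ s, f m) = ∑ m ∈ s, dotp u (f m) := by
  classical
  induction s using Finset.induction with
  | empty => simp [dotp]
  | insert _ _ h ih =>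
      rw [Finset.sum_insert h, dotp_add_right, ih, Finset.sum_insert h]

lemma dotp_add_left (u v x : Fin n → ℝ) : dotp (u + v) x = dotp u x + dotp v x := by
  rw [dotp_comm, dotp_add_right, dotp_comm x u, dotp_comm x v]

noncomputable def dotBil : (Fin n → ℝ) →ₗ[ℝ] (Fin n → ℝ) →ₗ[ℝ] ℝ :=
  LinearMap.mk₂ ℝ dotp dotp_add_left
    (fun c u x => dotp_smul_left u c x)
    dotp_add_right
    (fun c u x => dotp_smul_right u c x)

@[simp] lemma dotBil_apply (u x : Fin n → ℝ) : dotBil u x = dotp u x := rfl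

lemma isLinearMap_dotp (u : Fin n → ℝ) : IsLinearMap ℝ (fun x => dotp u x) :=
  ⟨fun x y => dotp_add_right u x y, fun c x => dotp_smul_right u c x⟩


/-! ### orthant and orthHull -/

def Qorth (n : ℕ) : Set (Fin n → ℝ) := {x | ∀ i, 0 ≤ x i}

lemma convex_Qorth : Convex ℝ (Qorth n) := by
  intro x hx y hy a b ha hb hab i
  have := add_nonneg (mul_nonneg ha (hx i)) (mul_nonneg hb (hy i))
  simpa using this

lemma isClosed_Qorth : IsClosed (Qorth n) := by
  have : Qorth n = ⋂ i, {x : Fin n → ℝ | 0 ≤ x i} := by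
    ext x; simp [Qorth]
  rw [this]
  exact isClosed_iInter fun i => isClosed_le continuous_const (continuous_apply i)

lemma union_orthants (S : Set (Fin n → ℝ)) :
    (⋃ m ∈ S, {x : Fin n → ℝ | ∀ i, m i ≤ x i}) = S + Qorth n := by
  ext x
  constructor
  · rintro hx
    simp only [Set.mem_iUnion] at hx
    obtain ⟨m, hm, hx⟩ := hx
    exact ⟨m, hm, x - m, fun i => by simpa using hx i, by funext i; simp⟩
  · rintro ⟨m, hm, q, hq, rfl⟩
    simp only [Set.mem_iUnion]
    exact ⟨m, hm, fun i => by simpa using hq i⟩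

lemma orthHull_eq (S : Set (Fin n → ℝ)) :
    orthHull S = convexHull ℝ S + Qorth n := by
  rw [orthHull, union_orthants, convexHull_add, convex_Qorth.convexHull_eq]

lemma subset_orthHull (S : Set (Fin n → ℝ)) : S ⊆ orthHull S := by
  intro m hm
  rw [orthHull_eq]
  exact ⟨m, subset_convexHull ℝ S hm, 0, fun i => le_refl 0, by simp⟩

lemma Qorth_add_Qorth : Qorth n + Qorth n = Qorth n := by
  apply Set.Subset.antisymm
  · rintro x ⟨a, ha, b, hb, rfl⟩ i
    exact add_nonneg (ha i) (hb i)
  · intro q hq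
    exact ⟨q, hq, 0, fun i => le_refl 0, by simp⟩

lemma orthHull_add_mem {S : Set (Fin n → ℝ)} {x q : Fin n → ℝ}
    (hx : x ∈ orthHull S) (hq : ∀ i, 0 ≤ q i) : x + q ∈ orthHull S := by
  rw [orthHull_eq] at hx ⊢
  obtain ⟨y, hy, r, hr, rfl⟩ := hx
  exact ⟨y, hy, r + q, fun i => add_nonneg (hr i) (hq i), (add_assoc y r q).symm⟩

lemma isClosed_orthHull (F : Finset (Fin n → ℝ)) : IsClosed (orthHull (↑F : Set (Fin n → ℝ))) := by
  rw [orthHull_eq]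
  have hcompact : IsCompact (convexHull ℝ (↑F : Set (Fin n → ℝ))) :=
    (F.finite_toSet).isCompact_convexHull ℝ
  have h := isClosed_Qorth.vadd_right_of_isCompact (G := Fin n → ℝ) hcompact
  have heq : (Qorth n) +ᵥ convexHull ℝ (↑F : Set (Fin n → ℝ))
      = convexHull ℝ (↑F : Set (Fin n → ℝ)) + Qorth n := by
    ext x
    simp only [Set.mem_vadd_set, Set.mem_add]
    constructor
    · rintro ⟨q, hq, y, hy, rfl⟩; exact ⟨y, hy, q, hq, (add_comm q y ▸ rfl)⟩
    · rintro ⟨y, hy, q, hq, rfl⟩; exact ⟨q, hq, y, hy, (add_comm q y ▸ rfl)⟩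
  rwa [heq] at h

lemma orthHull_add (S T : Set (Fin n → ℝ)) :
    orthHull S + orthHull T = orthHull (S + T) := by
  rw [orthHull_eq, orthHull_eq, orthHull_eq, convexHull_add]
  have : convexHull ℝ S + Qorth n + (convexHull ℝ T + Qorth n)
      = convexHull ℝ S + convexHull ℝ T + (Qorth n + Qorth n) := by
    abel
  rw [this, Qorth_add_Qorth]

/-! ### dval over orthHull -/

lemma le_dotp_of_mem {F : Finset (Fin n → ℝ)} (hne : F.Nonempty) {u : Fin n → ℝ}
    (hu : ∀ i, 0 ≤ u i) {x : Fin n → ℝ} (hx : x ∈ orthHull (↑F : Set (Fin n → ℝ))) :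
    F.inf' hne (fun m => dotp u m) ≤ dotp u x := by
  rw [orthHull_eq] at hx
  obtain ⟨y, hy, q, hq, rfl⟩ := hx
  have h1 : F.inf' hne (fun m => dotp u m) ≤ dotp u y := by
    have hC : Convex ℝ {z : Fin n → ℝ | F.inf' hne (fun m => dotp u m) ≤ dotp u z} :=
      convex_halfSpace_ge (isLinearMap_dotp u) _
    have hsub : (↑F : Set (Fin n → ℝ)) ⊆
        {z : Fin n → ℝ | F.inf' hne (fun m => dotp u m) ≤ dotp u z} :=
      fun m hm => by
        have : m ∈ F := by exact_mod_cast hm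
        exact Finset.inf'_le (fun m => dotp u m) this
    exact convexHull_min hsub hC hy
  have h2 : 0 ≤ dotp u q := dotp_nonneg hu hq
  rw [dotp_add_right]
  linarith

lemma dval_orthHull {F : Finset (Fin n → ℝ)} (hne : F.Nonempty) {u : Fin n → ℝ}
    (hu : ∀ i, 0 ≤ u i) :
    dval u (orthHull (↑F : Set (Fin n → ℝ))) = F.inf' hne (fun m => dotp u m) := by
  obtain ⟨m₀, hm₀, hmin⟩ := Finset.exists_mem_eq_inf' hne (fun m => dotp u m)
  apply le_antisymm
  · apply csInf_le
    · exact ⟨F.inf' hne (fun m => dotp u m), by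
        rintro b ⟨x, hx, rfl⟩; exact le_dotp_of_mem hne hu hx⟩
    · exact ⟨m₀, subset_orthHull _ (by exact_mod_cast hm₀), hmin.symm⟩
  · apply le_csInf
    · exact ⟨dotp u m₀, m₀, subset_orthHull _ (by exact_mod_cast hm₀), rfl⟩
    · rintro b ⟨x, hx, rfl⟩; exact le_dotp_of_mem hne hu hx

lemma dval_le_of_mem {F : Finset (Fin n → ℝ)} (hne : F.Nonempty) {u : Fin n → ℝ}
    (hu : ∀ i, 0 ≤ u i) {x : Fin n → ℝ} (hx : x ∈ orthHull (↑F : Set (Fin n → ℝ))) :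
    dval u (orthHull (↑F : Set (Fin n → ℝ))) ≤ dotp u x := by
  rw [dval_orthHull hne hu]; exact le_dotp_of_mem hne hu hx

lemma dval_attain {F : Finset (Fin n → ℝ)} (hne : F.Nonempty) {u : Fin n → ℝ}
    (hu : ∀ i, 0 ≤ u i) :
    ∃ m ∈ F, dotp u m = dval u (orthHull (↑F : Set (Fin n → ℝ))) := by
  obtain ⟨m₀, hm₀, hmin⟩ := Finset.exists_mem_eq_inf' hne (fun m => dotp u m)
  exact ⟨m₀, hm₀, by rw [dval_orthHull hne hu, hmin]⟩

lemma dval_nonneg {F : Finset (Fin n → ℝ)} (hne : F.Nonempty)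
    (hFnn : ∀ m ∈ F, ∀ i, (0:ℝ) ≤ m i) {u : Fin n → ℝ} (hu : ∀ i, 0 ≤ u i) :
    0 ≤ dval u (orthHull (↑F : Set (Fin n → ℝ))) := by
  obtain ⟨m₀, hm₀, hmin⟩ := dval_attain hne hu
  rw [← hmin]
  exact dotp_nonneg hu (hFnn m₀ hm₀)

lemma dval_smul (u : Fin n → ℝ) {c : ℝ} (hc : 0 ≤ c) (Γ : Set (Fin n → ℝ)) :
    dval (c • u) Γ = c * dval u Γ := by
  have himg : (fun x => dotp (c • u) x) '' Γ = c • ((fun x => dotp u x) '' Γ) := by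
    ext b
    constructor
    · rintro ⟨x, hx, rfl⟩
      exact ⟨dotp u x, ⟨x, hx, rfl⟩, (dotp_smul_left u c x).symm⟩
    · rintro ⟨b', ⟨x, hx, rfl⟩, rfl⟩
      exact ⟨x, hx, by simp only [smul_eq_mul]; rw [dotp_smul_left]⟩
  rw [dval, himg, Real.sInf_smul_of_nonneg hc, dval, smul_eq_mul]

lemma fmeet_smul (u : Fin n → ℝ) {c : ℝ} (hc : 0 < c) (Γ : Set (Fin n → ℝ)) :
    fmeet (c • u) Γ = fmeet u Γ := by
  ext x
  simp only [fmeet, Set.mem_setOf_eq, dotp_smul_left, dval_smul u hc.le Γ]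
  constructor
  · rintro ⟨hx, h⟩; exact ⟨hx, mul_left_cancel₀ hc.ne' h⟩
  · rintro ⟨hx, h⟩; exact ⟨hx, by rw [h]⟩

/-- Decomposition of a point in the first-meet locus of an `orthHull`. -/
lemma fmeet_decomp {F : Finset (Fin n → ℝ)} (hne : F.Nonempty) {u : Fin n → ℝ}
    (hu : ∀ i, 0 ≤ u i) {x : Fin n → ℝ}
    (hx : x ∈ fmeet u (orthHull (↑F : Set (Fin n → ℝ)))) :
    ∃ μ : (Fin n → ℝ) → ℝ, (∀ m ∈ F, 0 ≤ μ m) ∧ (∑ m ∈ F, μ m = 1) ∧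
      (∀ m ∈ F, μ m ≠ 0 → dotp u m = dval u (orthHull (↑F : Set (Fin n → ℝ)))) ∧
      ∃ q : Fin n → ℝ, (∀ i, 0 ≤ q i) ∧ (∀ i, u i ≠ 0 → q i = 0) ∧
        x = (∑ m ∈ F, μ m • m) + q := by
  obtain ⟨hxP, hxd⟩ := hx
  rw [orthHull_eq] at hxP
  obtain ⟨y, hy, q, hq, rfl⟩ := hxP
  rw [Finset.convexHull_eq] at hy
  obtain ⟨μ, hμ0, hμ1, hμc⟩ := hy
  have hyeq : y = ∑ m ∈ F, μ m • m := by
    rw [← hμc, Finset.centerMass_eq_of_sum_1 _ _ hμ1]; rfl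
  set d := dval u (orthHull (↑F : Set (Fin n → ℝ))) with hd
  have hdy : dotp u y = ∑ m ∈ F, μ m * dotp u m := by
    rw [hyeq, dotp_sum_right]
    exact Finset.sum_congr rfl fun m _ => dotp_smul_right u (μ m) m
  have hsum : ∑ m ∈ F, μ m * dotp u m + dotp u q = d := by
    rw [← hdy, ← dotp_add_right]; exact hxd
  have hterm : ∀ m ∈ F, d * μ m ≤ μ m * dotp u m := by
    intro m hm
    have : d ≤ dotp u m := dval_le_of_mem hne hu (subset_orthHull _ (by exact_mod_cast hm))
    calc d * μ m = μ m * d := mul_comm _ _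
    _ ≤ μ m * dotp u m := mul_le_mul_of_nonneg_left this (hμ0 m hm)
  have hge : d ≤ ∑ m ∈ F, μ m * dotp u m := by
    calc d = ∑ m ∈ F, d * μ m := by rw [← Finset.mul_sum, hμ1, mul_one]
    _ ≤ ∑ m ∈ F, μ m * dotp u m := Finset.sum_le_sum hterm
  have hq0 : dotp u q = 0 := by
    have h2 : 0 ≤ dotp u q := dotp_nonneg hu hq
    linarith
  have hysum : ∑ m ∈ F, μ m * dotp u m = d := by linarith
  have htight : ∀ m ∈ F, μ m ≠ 0 → dotp u m = d := by
    have hzero : ∑ m ∈ F, (μ m * dotp u m - d * μ m) = 0 := by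
      rw [Finset.sum_sub_distrib, hysum]
      rw [← Finset.mul_sum, hμ1, mul_one, sub_self]
    intro m hm hμm
    have := (Finset.sum_eq_zero_iff_of_nonneg
      (fun m hm => by linarith [hterm m hm])).1 hzero m hm
    have hμmpos : 0 < μ m := lt_of_le_of_ne (hμ0 m hm) (Ne.symm hμm)
    nlinarith [this]
  refine ⟨μ, hμ0, hμ1, htight, q, hq, ?_, by rw [hyeq]⟩
  intro i hui
  have := dotp_coord_zero hu hq hq0 i
  rcases mul_eq_zero.1 this with h | h
  · exact absurd h hui
  · exact h

/-! ### dot-orthogonal complements and dimensions -/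

open Module

noncomputable def orthK (V : Submodule ℝ (Fin n → ℝ)) : Submodule ℝ (Fin n → ℝ) :=
  LinearMap.ker ((dotBil (n := n)).domRestrict₂ V)

lemma mem_orthK {V : Submodule ℝ (Fin n → ℝ)} {v : Fin n → ℝ} :
    v ∈ orthK V ↔ ∀ x ∈ V, dotp v x = 0 := by
  rw [orthK, LinearMap.mem_ker]
  constructor
  · intro h x hx
    have := congrArg (fun φ => φ ⟨x, hx⟩) h
    simpa [LinearMap.domRestrict₂_apply] using this
  · intro h
    apply LinearMap.ext
    rintro ⟨x, hx⟩
    simpa [LinearMap.domRestrict₂_apply] using h x hx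

lemma mem_orthK_span {s : Set (Fin n → ℝ)} {v : Fin n → ℝ}
    (h : ∀ g ∈ s, dotp v g = 0) : v ∈ orthK (Submodule.span ℝ s) := by
  rw [mem_orthK]
  intro x hx
  induction hx using Submodule.span_induction with
  | mem x hxs => exact h x hxs
  | zero => simp [dotp]
  | add x y _ _ hx hy => rw [dotp_add_right, hx, hy, add_zero]
  | smul c x _ hx => rw [dotp_smul_right, hx, mul_zero]

lemma finrank_orthK_ge (V : Submodule ℝ (Fin n → ℝ)) :
    n ≤ finrank ℝ (orthK V) + finrank ℝ V := by
  have hrn := LinearMap.finrank_range_add_finrank_ker ((dotBil (n := n)).domRestrict₂ V)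
  have hn' : finrank ℝ (Fin n → ℝ) = n := by
    simp [Module.finrank_pi]
  have hle : finrank ℝ (LinearMap.range ((dotBil (n := n)).domRestrict₂ V))
      ≤ finrank ℝ (Module.Dual ℝ V) := Submodule.finrank_le _
  have hdual : finrank ℝ (Module.Dual ℝ V) = finrank ℝ V := Subspace.dual_finrank_eq
  rw [hn'] at hrn
  rw [hdual] at hle
  rw [show LinearMap.ker ((dotBil (n := n)).domRestrict₂ V) = orthK V from rfl] at hrn
  omega

lemma finrank_orthK_le (V : Submodule ℝ (Fin n → ℝ)) :
    finrank ℝ (orthK V) + finrank ℝ V ≤ n := by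
  have hinf : V ⊓ orthK V = ⊥ := by
    rw [eq_bot_iff]
    rintro x ⟨hxV, hxK⟩
    have := (mem_orthK.1 hxK) x hxV
    have hx0 : x = 0 := eq_zero_of_dotp_self this
    simp [hx0]
  have hsup := Submodule.finrank_sup_add_finrank_inf_eq V (orthK V)
  rw [hinf] at hsup
  have hb : finrank ℝ (⊥ : Submodule ℝ (Fin n → ℝ)) = 0 := finrank_bot ℝ _
  have hle : finrank ℝ ↥(V ⊔ orthK V) ≤ finrank ℝ (Fin n → ℝ) := Submodule.finrank_le _
  have hn' : finrank ℝ (Fin n → ℝ) = n := by simp [Module.finrank_pi]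
  omega

lemma finrank_ker_dotBil {u : Fin n → ℝ} (hu0 : ∀ i, 0 ≤ u i) (hune : u ≠ 0) :
    finrank ℝ (LinearMap.ker (dotBil u)) = n - 1 := by
  have hσ : 0 < sigmaS u := sigmaS_pos hu0 hune
  have hsurj : Function.Surjective (dotBil u) := by
    intro r
    refine ⟨(r / sigmaS u) • (fun _ => (1:ℝ)), ?_⟩
    have : dotp u ((r / sigmaS u) • (fun _ => (1:ℝ))) = (r / sigmaS u) * (1 * sigmaS u) := by
      rw [dotp_smul_right, dotp_const_right]
    simp only [dotBil_apply, this]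
    field_simp
  have hr : LinearMap.range (dotBil u) = ⊤ := LinearMap.range_eq_top.2 hsurj
  have hrn := LinearMap.finrank_range_add_finrank_ker (dotBil u)
  rw [hr] at hrn
  have h1 : finrank ℝ (⊤ : Submodule ℝ ℝ) = 1 := by simp
  have hn' : finrank ℝ (Fin n → ℝ) = n := by simp [Module.finrank_pi]
  omega

/-! ### Good vectors and the tangent spaces -/

def diagv (n : ℕ) (t₀ : ℝ) : Fin n → ℝ := fun _ => t₀

lemma sigmaS_add (u v : Fin n → ℝ) : sigmaS (u + v) = sigmaS u + sigmaS v := by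
  simp [sigmaS, Finset.sum_add_distrib]

lemma sigmaS_smul (c : ℝ) (u : Fin n → ℝ) : sigmaS (c • u) = c * sigmaS u := by
  simp [sigmaS, Finset.mul_sum]

lemma dotp_diag_expand (v : Fin n → ℝ) (t₀ : ℝ) (m : Fin n → ℝ) :
    dotp v (m - diagv n t₀) = dotp v m - t₀ * sigmaS v := by
  rw [dotp_sub_right, show (diagv n t₀) = (fun _ : Fin n => t₀) from rfl, dotp_const_right]

def Good (F : Finset (Fin n → ℝ)) (t₀ : ℝ) (Zp : Fin n → Prop) (u : Fin n → ℝ) : Prop :=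
  (∀ i, 0 ≤ u i) ∧ u ≠ 0 ∧ (∀ m ∈ F, t₀ * sigmaS u ≤ dotp u m) ∧ (∀ i, Zp i → u i = 0)

def Gset (F : Finset (Fin n → ℝ)) (t₀ : ℝ) (u : Fin n → ℝ) : Set (Fin n → ℝ) :=
  {x | ∃ m ∈ F, dotp u m = t₀ * sigmaS u ∧ x = m - diagv n t₀} ∪
    {x | ∃ i, u i = 0 ∧ x = Pi.single i 1}

noncomputable def Vu (F : Finset (Fin n → ℝ)) (t₀ : ℝ) (u : Fin n → ℝ) :
    Submodule ℝ (Fin n → ℝ) := Submodule.span ℝ (Gset F t₀ u)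

section Climb

variable {F : Finset (Fin n → ℝ)} {t₀ : ℝ} {Zp : Fin n → Prop}

lemma dotp_gset_zero {u : Fin n → ℝ} (g : Fin n → ℝ) (hg : g ∈ Gset F t₀ u) :
    dotp u g = 0 := by
  rcases hg with ⟨m, _, htight, rfl⟩ | ⟨i, hi, rfl⟩
  · rw [dotp_diag_expand, htight, sub_self]
  · rw [dotp_single_right, hi]

lemma mem_orthK_Vu (u : Fin n → ℝ) : u ∈ orthK (Vu F t₀ u) :=
  mem_orthK_span fun g hg => dotp_gset_zero g hg

lemma finrank_Vu_le {u : Fin n → ℝ} (hu0 : ∀ i, 0 ≤ u i) (hune : u ≠ 0) :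
    finrank ℝ (Vu F t₀ u) ≤ n - 1 := by
  have hle : Vu F t₀ u ≤ LinearMap.ker (dotBil u) := by
    rw [Vu, Submodule.span_le]
    intro g hg
    simp only [SetLike.mem_coe, LinearMap.mem_ker, dotBil_apply]
    exact dotp_gset_zero g hg
  calc finrank ℝ (Vu F t₀ u) ≤ finrank ℝ (LinearMap.ker (dotBil u)) :=
        Submodule.finrank_mono hle
  _ = n - 1 := finrank_ker_dotBil hu0 hune

lemma step_dir {u v : Fin n → ℝ} (hu : Good F t₀ Zp u)
    (hvK : ∀ g ∈ Gset F t₀ u, dotp v g = 0)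
    (hvns : v ∉ Submodule.span ℝ ({u} : Set (Fin n → ℝ)))
    (hneg : (∃ i, v i < 0) ∨ (∃ m ∈ F, dotp v m - t₀ * sigmaS v < 0)) :
    ∃ u', Good F t₀ Zp u' ∧ Gset F t₀ u ⊆ Gset F t₀ u' ∧
      ∃ g ∈ Gset F t₀ u', dotp v g ≠ 0 := by
  classical
  obtain ⟨hu0, hune, huF, huZ⟩ := hu
  -- the finset of upper bounds for the step size
  set R : Finset ℝ :=
    ((Finset.univ.filter fun i => v i < 0).image fun i => u i / (-(v i))) ∪
      ((F.filter fun m => dotp v m - t₀ * sigmaS v < 0).image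
        fun m => (dotp u m - t₀ * sigmaS u) / (-(dotp v m - t₀ * sigmaS v))) with hR
  have hRne : R.Nonempty := by
    rcases hneg with ⟨i, hi⟩ | ⟨m, hm, hslope⟩
    · exact ⟨u i / (-(v i)), Finset.mem_union_left _
        (Finset.mem_image.2 ⟨i, Finset.mem_filter.2 ⟨Finset.mem_univ i, hi⟩, rfl⟩)⟩
    · exact ⟨(dotp u m - t₀ * sigmaS u) / (-(dotp v m - t₀ * sigmaS v)),
        Finset.mem_union_right _
          (Finset.mem_image.2 ⟨m, Finset.mem_filter.2 ⟨hm, hslope⟩, rfl⟩)⟩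
  have hvzero : ∀ i, u i = 0 → v i = 0 := by
    intro i hui
    have := hvK (Pi.single i 1) (Or.inr ⟨i, hui, rfl⟩)
    rwa [dotp_single_right] at this
  have hvtight : ∀ m ∈ F, dotp u m = t₀ * sigmaS u → dotp v m - t₀ * sigmaS v = 0 := by
    intro m hm htight
    have := hvK (m - diagv n t₀) (Or.inl ⟨m, hm, htight, rfl⟩)
    rwa [dotp_diag_expand] at this
  have hRpos : ∀ r ∈ R, 0 < r := by
    intro r hr
    rcases Finset.mem_union.1 hr with h | h
    · obtain ⟨i, hi, rfl⟩ := Finset.mem_image.1 h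
      have hvi : v i < 0 := (Finset.mem_filter.1 hi).2
      have hui : 0 < u i := by
        rcases lt_or_eq_of_le (hu0 i) with h' | h'
        · exact h'
        · exact absurd (hvzero i h'.symm) (ne_of_lt hvi)
      exact div_pos hui (by linarith)
    · obtain ⟨m, hm, rfl⟩ := Finset.mem_image.1 h
      obtain ⟨hmF, hslope⟩ := Finset.mem_filter.1 hm
      have hA : 0 < dotp u m - t₀ * sigmaS u := by
        rcases lt_or_eq_of_le (huF m hmF) with h' | h'
        · linarith
        · exact absurd (hvtight m hmF h'.symm) (ne_of_lt hslope)
      exact div_pos hA (by linarith)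
  set ts := R.min' hRne with hts
  have htspos : 0 < ts := hRpos _ (R.min'_mem hRne)
  set u' := u + ts • v with hu'
  have hu'app : ∀ i, u' i = u i + ts * v i := fun i => rfl
  have hdotu' : ∀ x, dotp u' x = dotp u x + ts * dotp v x := by
    intro x
    rw [hu', dotp_add_left, dotp_smul_left]
  have hσu' : sigmaS u' = sigmaS u + ts * sigmaS v := by
    rw [hu', sigmaS_add, sigmaS_smul]
  -- coordinatewise nonnegativity
  have hu'0 : ∀ i, 0 ≤ u' i := by
    intro i
    by_cases hvi : v i < 0
    · have hmem : u i / (-(v i)) ∈ R := Finset.mem_union_left _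
        (Finset.mem_image.2 ⟨i, Finset.mem_filter.2 ⟨Finset.mem_univ i, hvi⟩, rfl⟩)
      have hle : ts ≤ u i / (-(v i)) := R.min'_le _ hmem
      have hvpos : 0 < -(v i) := by linarith
      have := (le_div_iff₀ hvpos).1 hle
      rw [hu'app]; nlinarith
    · push_neg at hvi
      rw [hu'app]
      exact add_nonneg (hu0 i) (mul_nonneg htspos.le hvi)
  -- constraints
  have hu'F : ∀ m ∈ F, t₀ * sigmaS u' ≤ dotp u' m := by
    intro m hm
    rw [hdotu' m, hσu']
    by_cases hslope : dotp v m - t₀ * sigmaS v < 0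
    · have hmem : (dotp u m - t₀ * sigmaS u) / (-(dotp v m - t₀ * sigmaS v)) ∈ R :=
        Finset.mem_union_right _
          (Finset.mem_image.2 ⟨m, Finset.mem_filter.2 ⟨hm, hslope⟩, rfl⟩)
      have hle : ts ≤ _ := R.min'_le _ hmem
      have hpos : 0 < -(dotp v m - t₀ * sigmaS v) := by linarith
      have := (le_div_iff₀ hpos).1 hle
      nlinarith
    · push_neg at hslope
      have h1 := huF m hm
      nlinarith
  -- Zp constraint and zero preservation
  have hzero' : ∀ i, u i = 0 → u' i = 0 := by
    intro i hui
    rw [hu'app, hui, hvzero i hui, mul_zero, add_zero]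
  have hu'Z : ∀ i, Zp i → u' i = 0 := fun i hi => hzero' i (huZ i hi)
  -- u' ≠ 0
  have hu'ne : u' ≠ 0 := by
    intro h0
    apply hvns
    rw [Submodule.mem_span_singleton]
    refine ⟨-(ts)⁻¹, ?_⟩
    funext i
    have : u i + ts * v i = 0 := by
      have := congrFun h0 i
      simpa [hu'app] using this
    have hv : v i = -(u i) / ts := by field_simp; linarith
    simp only [Pi.smul_apply, smul_eq_mul, hv]
    field_simp
  have hGood' : Good F t₀ Zp u' := ⟨hu'0, hu'ne, hu'F, hu'Z⟩
  -- monotonicity of Gset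
  have hmono : Gset F t₀ u ⊆ Gset F t₀ u' := by
    rintro g (⟨m, hm, htight, rfl⟩ | ⟨i, hi, rfl⟩)
    · left
      refine ⟨m, hm, ?_, rfl⟩
      have hsl := hvtight m hm htight
      rw [hdotu' m, hσu', htight]
      ring_nf
      ring_nf at hsl
      nlinarith [hsl]
    · right
      exact ⟨i, hzero' i hi, rfl⟩
  -- a new tight generator not orthogonal to v
  have hnew : ∃ g ∈ Gset F t₀ u', dotp v g ≠ 0 := by
    have hmem := R.min'_mem hRne
    rw [← hts] at hmem
    rcases Finset.mem_union.1 hmem with h | h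
    · obtain ⟨i, hi, heq⟩ := Finset.mem_image.1 h
      have hvi : v i < 0 := (Finset.mem_filter.1 hi).2
      refine ⟨Pi.single i 1, Or.inr ⟨i, ?_, rfl⟩, by rw [dotp_single_right]; linarith⟩
      have hvne : v i ≠ 0 := ne_of_lt hvi
      have hts' : ts * v i = -(u i) := by
        rw [← heq]; field_simp
      rw [hu'app]
      linarith
    · obtain ⟨m, hm, heq⟩ := Finset.mem_image.1 h
      obtain ⟨hmF, hslope⟩ := Finset.mem_filter.1 hm
      refine ⟨m - diagv n t₀, Or.inl ⟨m, hmF, ?_, rfl⟩,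
        by rw [dotp_diag_expand]; linarith⟩
      have hslne : dotp v m - t₀ * sigmaS v ≠ 0 := ne_of_lt hslope
      have hts' : ts * (dotp v m - t₀ * sigmaS v) = -(dotp u m - t₀ * sigmaS u) := by
        rw [← heq]; field_simp
      rw [hdotu' m, hσu']
      linear_combination hts'
  exact ⟨u', hGood', hmono, hnew⟩

end Climb

section Climb2

variable {F : Finset (Fin n → ℝ)} {t₀ : ℝ} {Zp : Fin n → Prop}

lemma climb_step (hn : 2 ≤ n) {u : Fin n → ℝ} (hu : Good F t₀ Zp u)
    (hrank : finrank ℝ (Vu F t₀ u) + 2 ≤ n) :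
    ∃ u', Good F t₀ Zp u' ∧ finrank ℝ (Vu F t₀ u) < finrank ℝ (Vu F t₀ u') := by
  classical
  obtain ⟨hu0, hune, huF, huZ⟩ := hu
  have hKge := finrank_orthK_ge (Vu F t₀ u)
  have hK2 : 2 ≤ finrank ℝ (orthK (Vu F t₀ u)) := by omega
  -- find v in the orthogonal complement, not parallel to u
  have hvex : ∃ v ∈ orthK (Vu F t₀ u), v ∉ Submodule.span ℝ ({u} : Set (Fin n → ℝ)) := by
    by_contra h
    push_neg at h
    have hle : orthK (Vu F t₀ u) ≤ Submodule.span ℝ ({u} : Set (Fin n → ℝ)) := h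
    have h1 : finrank ℝ (orthK (Vu F t₀ u))
        ≤ finrank ℝ (Submodule.span ℝ ({u} : Set (Fin n → ℝ))) :=
      Submodule.finrank_mono hle
    rw [finrank_span_singleton hune] at h1
    omega
  obtain ⟨v, hvK, hvns⟩ := hvex
  have hvG : ∀ g ∈ Gset F t₀ u, dotp v g = 0 := fun g hg =>
    (mem_orthK.1 hvK) g (Submodule.subset_span hg)
  -- v or -v provides a feasible decreasing direction
  have hfinish : ∀ w : Fin n → ℝ, (∀ g ∈ Gset F t₀ u, dotp w g = 0) →
      w ∉ Submodule.span ℝ ({u} : Set (Fin n → ℝ)) →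
      ((∃ i, w i < 0) ∨ (∃ m ∈ F, dotp w m - t₀ * sigmaS w < 0)) →
      ∃ u', Good F t₀ Zp u' ∧ finrank ℝ (Vu F t₀ u) < finrank ℝ (Vu F t₀ u') := by
    intro w hwG hwns hwneg
    obtain ⟨u', hGood', hmono, g, hgmem, hgdot⟩ :=
      step_dir ⟨hu0, hune, huF, huZ⟩ hwG hwns hwneg
    refine ⟨u', hGood', ?_⟩
    have hle : Vu F t₀ u ≤ Vu F t₀ u' := Submodule.span_mono hmono
    have hglt : g ∉ Vu F t₀ u := by
      intro hgV
      have : dotp w g = 0 := by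
        have := mem_orthK_span (s := Gset F t₀ u) hwG
        exact (mem_orthK.1 this) g hgV
      exact hgdot this
    have hlt : Vu F t₀ u < Vu F t₀ u' :=
      lt_of_le_of_ne hle (fun hEq => hglt (hEq ▸ Submodule.subset_span hgmem))
    exact Submodule.finrank_lt_finrank_of_lt hlt
  by_cases hneg : (∃ i, v i < 0) ∨ (∃ m ∈ F, dotp v m - t₀ * sigmaS v < 0)
  · exact hfinish v hvG hvns hneg
  · by_cases hneg' : (∃ i, (-v) i < 0) ∨ (∃ m ∈ F, dotp (-v) m - t₀ * sigmaS (-v) < 0)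
    · refine hfinish (-v) ?_ ?_ hneg'
      · intro g hg
        have hnv : -v = (-1 : ℝ) • v := by funext i; simp
        rw [hnv, dotp_smul_left, hvG g hg, mul_zero]
      · intro hmem
        exact hvns (by simpa using Submodule.neg_mem _ hmem)
    · exfalso
      push_neg at hneg hneg'
      have hv0 : v = 0 := by
        funext i
        have h1 := hneg.1 i
        have h2 := hneg'.1 i
        simp only [Pi.neg_apply, not_lt, neg_nonneg] at h1 h2
        simp only [Pi.zero_apply]
        linarith
      exact hvns (hv0 ▸ Submodule.zero_mem _)

lemma climb (hn : 2 ≤ n) :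
    ∀ k : ℕ, ∀ u : Fin n → ℝ, Good F t₀ Zp u → n - 1 ≤ k + finrank ℝ (Vu F t₀ u) →
      ∃ u', Good F t₀ Zp u' ∧ finrank ℝ (Vu F t₀ u') = n - 1 := by
  intro k
  induction k with
  | zero =>
      intro u hu hk
      exact ⟨u, hu, le_antisymm (finrank_Vu_le hu.1 hu.2.1) (by omega)⟩
  | succ k ih =>
      intro u hu hk
      by_cases hEq : finrank ℝ (Vu F t₀ u) = n - 1
      · exact ⟨u, hu, hEq⟩
      · have hlt : finrank ℝ (Vu F t₀ u) < n - 1 :=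
          lt_of_le_of_ne (finrank_Vu_le hu.1 hu.2.1) hEq
        have hrank : finrank ℝ (Vu F t₀ u) + 2 ≤ n := by omega
        obtain ⟨u', hu', hgt⟩ := climb_step hn hu hrank
        exact ih u' hu' (by omega)

end Climb2

section Link

variable {F : Finset (Fin n → ℝ)} {t₀ : ℝ} {Zp : Fin n → Prop}

lemma eq_sum_single (x : Fin n → ℝ) :
    x = ∑ i, x i • (Pi.single i 1 : Fin n → ℝ) := by
  funext j
  rw [Finset.sum_apply]
  rw [Finset.sum_eq_single j (fun i _ hij => by
    simp only [Pi.smul_apply, smul_eq_mul]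
    rw [Pi.single_eq_of_ne (Ne.symm hij), mul_zero]) (by simp)]
  simp

lemma single_nonneg' (i : Fin n) : ∀ j, (0:ℝ) ≤ (Pi.single i 1 : Fin n → ℝ) j := by
  intro j
  by_cases h : j = i
  · subst h; simp
  · rw [Pi.single_eq_of_ne h]

lemma good_dval (hne : F.Nonempty) (hdiagP : diagv n t₀ ∈ orthHull (↑F : Set (Fin n → ℝ)))
    {u : Fin n → ℝ} (hu : Good F t₀ Zp u) :
    dval u (orthHull (↑F : Set (Fin n → ℝ))) = t₀ * sigmaS u := by
  apply le_antisymm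
  · have := dval_le_of_mem hne hu.1 hdiagP
    rwa [show diagv n t₀ = (fun _ : Fin n => t₀) from rfl, dotp_const_right] at this
  · rw [dval_orthHull hne hu.1]
    exact Finset.le_inf' _ _ fun m hm => hu.2.2.1 m hm

lemma good_diag_mem (hne : F.Nonempty) (hdiagP : diagv n t₀ ∈ orthHull (↑F : Set (Fin n → ℝ)))
    {u : Fin n → ℝ} (hu : Good F t₀ Zp u) :
    diagv n t₀ ∈ fmeet u (orthHull (↑F : Set (Fin n → ℝ))) := by
  refine ⟨hdiagP, ?_⟩
  rw [good_dval hne hdiagP hu, show diagv n t₀ = (fun _ : Fin n => t₀) from rfl,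
    dotp_const_right]

lemma good_tight_exists (hne : F.Nonempty)
    (hdiagP : diagv n t₀ ∈ orthHull (↑F : Set (Fin n → ℝ)))
    {u : Fin n → ℝ} (hu : Good F t₀ Zp u) :
    ∃ m ∈ F, dotp u m = t₀ * sigmaS u := by
  obtain ⟨m, hm, hval⟩ := dval_attain hne hu.1
  exact ⟨m, hm, by rw [hval, good_dval hne hdiagP hu]⟩

/-- Key decomposition: a point of the first-meet locus, minus any base point,
lies in any submodule containing the tight generators and the free coordinates. -/
lemma fmeet_sub_mem_span (hne : F.Nonempty) {u : Fin n → ℝ} (hu0 : ∀ i, 0 ≤ u i)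
    {x : Fin n → ℝ} (hx : x ∈ fmeet u (orthHull (↑F : Set (Fin n → ℝ))))
    (b : Fin n → ℝ) (W : Submodule ℝ (Fin n → ℝ))
    (hW1 : ∀ m ∈ F, dotp u m = dval u (orthHull (↑F : Set (Fin n → ℝ))) → m - b ∈ W)
    (hW2 : ∀ i, u i = 0 → Pi.single i 1 ∈ W) :
    x - b ∈ W := by
  obtain ⟨μ, hμ0, hμ1, htight, q, hq0, hqz, hxeq⟩ := fmeet_decomp hne hu0 hx
  have hxb : x - b = (∑ m ∈ F, μ m • (m - b)) + q := by
    rw [hxeq]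
    have hsplit : ∑ m ∈ F, μ m • (m - b) = (∑ m ∈ F, μ m • m) - b := by
      simp only [smul_sub]
      rw [Finset.sum_sub_distrib, ← Finset.sum_smul, hμ1, one_smul]
    rw [hsplit]
    abel
  rw [hxb]
  apply Submodule.add_mem
  · apply Submodule.sum_mem
    intro m hm
    by_cases hμm : μ m = 0
    · rw [hμm, zero_smul]; exact Submodule.zero_mem _
    · exact Submodule.smul_mem _ _ (hW1 m hm (htight m hm hμm))
  · have hqeq : q = ∑ i, q i • (Pi.single i 1 : Fin n → ℝ) := eq_sum_single q
    rw [hqeq]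
    apply Submodule.sum_mem
    intro i _
    by_cases hui : u i = 0
    · exact Submodule.smul_mem _ _ (hW2 i hui)
    · rw [hqz i hui, zero_smul]; exact Submodule.zero_mem _

lemma vectorSpan_fmeet_eq (hne : F.Nonempty)
    (hdiagP : diagv n t₀ ∈ orthHull (↑F : Set (Fin n → ℝ)))
    {u : Fin n → ℝ} (hu : Good F t₀ Zp u) :
    vectorSpan ℝ (fmeet u (orthHull (↑F : Set (Fin n → ℝ)))) = Vu F t₀ u := by
  set P := orthHull (↑F : Set (Fin n → ℝ)) with hP
  have hdmem := good_diag_mem hne hdiagP hu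
  have hdv := good_dval hne hdiagP hu
  apply le_antisymm
  · rw [vectorSpan_def, Submodule.span_le]
    rintro y ⟨a, ha, c, hc, rfl⟩
    have key : ∀ x ∈ fmeet u P, x - diagv n t₀ ∈ Vu F t₀ u := by
      intro x hx
      apply fmeet_sub_mem_span hne hu.1 hx
      · intro m hm htm
        exact Submodule.subset_span (Or.inl ⟨m, hm, by rw [← hdv]; exact htm, rfl⟩)
      · intro i hi
        exact Submodule.subset_span (Or.inr ⟨i, hi, rfl⟩)
    show a - c ∈ (Vu F t₀ u : Set (Fin n → ℝ))
    have : a - c = (a - diagv n t₀) - (c - diagv n t₀) := by abel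
    rw [this]
    exact Submodule.sub_mem _ (key a ha) (key c hc)
  · rw [Vu, Submodule.span_le]
    rintro g (⟨m, hm, htm, rfl⟩ | ⟨i, hi, rfl⟩)
    · have hmf : m ∈ fmeet u P := ⟨subset_orthHull _ (by exact_mod_cast hm), by rw [hdv]; exact htm⟩
      have := vsub_mem_vectorSpan ℝ hmf hdmem
      rwa [vsub_eq_sub] at this
    · have hmem : diagv n t₀ + Pi.single i 1 ∈ fmeet u P := by
        refine ⟨orthHull_add_mem hdiagP (single_nonneg' i), ?_⟩
        rw [dotp_add_right, dotp_single_right, hi, add_zero, hdmem.2]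
      have := vsub_mem_vectorSpan ℝ hmem hdmem
      rwa [vsub_eq_sub, add_sub_cancel_left] at this

end Link

section Extract

variable {F : Finset (Fin n → ℝ)} {t₀ : ℝ} {Zp : Fin n → Prop}

lemma span_Grat (hne : F.Nonempty)
    (hdiagP : diagv n t₀ ∈ orthHull (↑F : Set (Fin n → ℝ)))
    {u : Fin n → ℝ} (hu : Good F t₀ Zp u)
    {m₁ : Fin n → ℝ} (hm₁F : m₁ ∈ F) (hm₁ : dotp u m₁ = t₀ * sigmaS u) :
    Submodule.span ℝ ({x | ∃ m ∈ F, dotp u m = t₀ * sigmaS u ∧ x = m - m₁} ∪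
      {x | ∃ i, u i = 0 ∧ x = Pi.single i 1}) = Vu F t₀ u := by
  set Grat : Set (Fin n → ℝ) := {x | ∃ m ∈ F, dotp u m = t₀ * sigmaS u ∧ x = m - m₁} ∪
      {x | ∃ i, u i = 0 ∧ x = Pi.single i 1} with hGrat
  have hdv := good_dval hne hdiagP hu
  have hdm₁ : diagv n t₀ - m₁ ∈ Submodule.span ℝ Grat := by
    apply fmeet_sub_mem_span hne hu.1 (good_diag_mem hne hdiagP hu) m₁
    · intro m hm htm
      exact Submodule.subset_span (Or.inl ⟨m, hm, by rw [← hdv]; exact htm, rfl⟩)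
    · intro i hi
      exact Submodule.subset_span (Or.inr ⟨i, hi, rfl⟩)
  apply le_antisymm
  · rw [Submodule.span_le]
    rintro g (⟨m, hm, htm, rfl⟩ | ⟨i, hi, rfl⟩)
    · have h1 : m - diagv n t₀ ∈ Vu F t₀ u :=
        Submodule.subset_span (Or.inl ⟨m, hm, htm, rfl⟩)
      have h2 : m₁ - diagv n t₀ ∈ Vu F t₀ u :=
        Submodule.subset_span (Or.inl ⟨m₁, hm₁F, hm₁, rfl⟩)
      have : m - m₁ = (m - diagv n t₀) - (m₁ - diagv n t₀) := by abel
      rw [this]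
      exact Submodule.sub_mem _ h1 h2
    · exact Submodule.subset_span (Or.inr ⟨i, hi, rfl⟩)
  · rw [Vu, Submodule.span_le]
    rintro g (⟨m, hm, htm, rfl⟩ | ⟨i, hi, rfl⟩)
    · have h1 : m - m₁ ∈ Submodule.span ℝ Grat :=
        Submodule.subset_span (Or.inl ⟨m, hm, htm, rfl⟩)
      have : m - diagv n t₀ = (m - m₁) - (diagv n t₀ - m₁) := by abel
      rw [this]
      exact Submodule.sub_mem _ h1 hdm₁
    · exact Submodule.subset_span (Or.inr ⟨i, hi, rfl⟩)

lemma single_int (a c : Fin n) : ∃ z : ℤ, (Pi.single a 1 : Fin n → ℝ) c = (z:ℝ) := by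
  by_cases h : c = a
  · subst h; exact ⟨1, by simp⟩
  · exact ⟨0, by rw [Pi.single_eq_of_ne h]; simp⟩

lemma det_int {N : Matrix (Fin n) (Fin n) ℝ} (h : ∀ r c, ∃ z : ℤ, N r c = (z:ℝ)) :
    ∃ z : ℤ, N.det = (z:ℝ) := by
  choose B hB using h
  have hN : N = (Matrix.of B).map (fun z : ℤ => (z : ℝ)) := by
    ext r c; exact hB r c
  refine ⟨(Matrix.of B).det, ?_⟩
  have h2 := RingHom.map_det (Int.castRingHom ℝ) (Matrix.of B)
  rw [RingHom.mapMatrix_apply] at h2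
  rw [hN, show ((fun z : ℤ => (z:ℝ))) = ⇑(Int.castRingHom ℝ) from rfl, ← h2]
  simp

lemma exists_int_normal (hn : 2 ≤ n) (hne : F.Nonempty)
    (hFint : ∀ m ∈ F, ∀ i, ∃ k : ℕ, m i = (k:ℝ))
    (hdiagP : diagv n t₀ ∈ orthHull (↑F : Set (Fin n → ℝ)))
    {u : Fin n → ℝ} (hu : Good F t₀ Zp u)
    (hrk : finrank ℝ (Vu F t₀ u) = n - 1) :
    ∃ (z : Fin n → ℤ) (c : ℝ), 0 < c ∧ (fun i => ((z i : ℝ))) = c • u := by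
  classical
  obtain ⟨m₁, hm₁F, hm₁⟩ := good_tight_exists hne hdiagP hu
  set Grat : Set (Fin n → ℝ) := {x | ∃ m ∈ F, dotp u m = t₀ * sigmaS u ∧ x = m - m₁} ∪
      {x | ∃ i, u i = 0 ∧ x = Pi.single i 1} with hGrat
  have hspan : Submodule.span ℝ Grat = Vu F t₀ u := span_Grat hne hdiagP hu hm₁F hm₁
  have hGint : ∀ x ∈ Grat, ∀ i, ∃ z : ℤ, x i = (z:ℝ) := by
    rintro x (⟨m, hm, _, rfl⟩ | ⟨i, _, rfl⟩) j
    · obtain ⟨k, hk⟩ := hFint m hm j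
      obtain ⟨k', hk'⟩ := hFint m₁ hm₁F j
      exact ⟨(k : ℤ) - (k' : ℤ), by rw [Pi.sub_apply, hk, hk']; push_cast; ring⟩
    · exact single_int i j
  obtain ⟨b, hbsub, hbspan, hbind⟩ := exists_linearIndependent ℝ Grat
  have hbspan' : Submodule.span ℝ b = Vu F t₀ u := by rw [hbspan, hspan]
  have hbfin : b.Finite := hbind.setFinite
  haveI := hbfin.fintype
  have hcard : b.toFinset.card = n - 1 := by
    have h := finrank_span_set_eq_card (R := ℝ) hbind
    rw [hbspan', hrk] at h
    omega
  have hj₀ : ∃ j₀ : Fin n, (Pi.single j₀ 1 : Fin n → ℝ) ∉ Submodule.span ℝ b := by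
    by_contra h
    push_neg at h
    have htop : finrank ℝ (Submodule.span ℝ b) = n := by
      have hT : Submodule.span ℝ b = ⊤ := by
        rw [eq_top_iff]
        intro x _
        rw [eq_sum_single x]
        exact Submodule.sum_mem _ fun i _ => Submodule.smul_mem _ _ (h i)
      rw [hT, finrank_top]
      simp [Module.finrank_pi]
    rw [hbspan', hrk] at htop
    omega
  obtain ⟨j₀, hj₀⟩ := hj₀
  set rows : Option ↥b → (Fin n → ℝ) :=
    fun o => Option.casesOn' o (Pi.single j₀ 1) (fun x => (x : Fin n → ℝ)) with hrows
  have hrowsind : LinearIndependent ℝ rows := by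
    apply linearIndependent_option'.2
    exact ⟨hbind, by rwa [Subtype.range_coe]⟩
  have hcardo : Fintype.card (Option ↥b) = n := by
    rw [Fintype.card_option, ← Set.toFinset_card, hcard]
    omega
  set e : Option ↥b ≃ Fin n := Fintype.equivFinOfCardEq hcardo with he
  set M : Matrix (Fin n) (Fin n) ℝ := Matrix.of (fun r => rows (e.symm r)) with hM
  have hMapp : ∀ r, M r = rows (e.symm r) := fun r => rfl
  have hMind : LinearIndependent ℝ (fun i => M i) :=
    hrowsind.comp e.symm (Equiv.injective _)
  have hdet : M.det ≠ 0 :=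
    ((Matrix.isUnit_iff_isUnit_det M).1 (Matrix.linearIndependent_rows_iff_isUnit.1 hMind)).ne_zero
  set LL : (Fin n → ℝ) →ₗ[ℝ] ℝ :=
    { toFun := fun x => (M.updateRow (e none) x).det
      map_add' := Matrix.det_updateRow_add M (e none)
      map_smul' := fun c x => by simpa using Matrix.det_updateRow_smul M (e none) c x } with hLL
  set q : Fin n → ℝ := fun j => LL (Pi.single j 1) with hq
  have hLdot : ∀ x, LL x = dotp q x := by
    intro x
    conv_lhs => rw [eq_sum_single x]
    rw [map_sum, dotp_comm]
    unfold dotp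
    apply Finset.sum_congr rfl
    intro i _
    rw [map_smul]
    simp [hq]
  have hqb : ∀ x ∈ b, dotp q x = 0 := by
    intro x hxb
    rw [← hLdot]
    have hne' : e (some (⟨x, hxb⟩ : ↥b)) ≠ e none := fun h => by
      simpa using e.injective h
    apply Matrix.det_zero_of_row_eq hne'
    rw [Matrix.updateRow_ne hne', Matrix.updateRow_self, hMapp]
    simp [hrows]
  have hqK : q ∈ orthK (Vu F t₀ u) := by
    rw [← hbspan']
    exact mem_orthK_span hqb
  have hqne : q ≠ 0 := by
    intro h
    apply hdet
    have hz : q j₀ = 0 := by rw [h]; rfl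
    rw [hq] at hz
    have hMe : M (e none) = Pi.single j₀ 1 := by rw [hMapp]; simp [hrows]
    have hz' : (M.updateRow (e none) (Pi.single j₀ 1)).det = 0 := hz
    rwa [← hMe, Matrix.updateRow_eq_self] at hz'
  -- the orthogonal complement is the span of u
  have hune := hu.2.1
  have hKle := finrank_orthK_le (Vu F t₀ u)
  rw [hrk] at hKle
  have hKeq : Submodule.span ℝ ({u} : Set (Fin n → ℝ)) = orthK (Vu F t₀ u) := by
    apply Submodule.eq_of_le_of_finrank_le
    · rw [Submodule.span_singleton_le_iff_mem]; exact mem_orthK_Vu u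
    · rw [finrank_span_singleton hune]
      omega
  obtain ⟨c₀, hc₀⟩ := Submodule.mem_span_singleton.1 (hKeq ▸ hqK)
  have hc₀ne : c₀ ≠ 0 := by
    rintro rfl
    apply hqne
    rw [← hc₀]
    simp
  -- q has integer entries
  have hrowsint : ∀ o c', ∃ z : ℤ, rows o c' = (z:ℝ) := by
    rintro (_ | x) c'
    · exact single_int j₀ c'
    · exact hGint (x : Fin n → ℝ) (hbsub x.2) c'
  have hqint : ∀ j, ∃ z : ℤ, q j = (z:ℝ) := by
    intro j
    apply det_int
    intro r c'
    by_cases hr : r = e none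
    · subst hr
      rw [Matrix.updateRow_self]
      exact single_int j c'
    · rw [Matrix.updateRow_ne hr, hMapp]
      exact hrowsint _ c'
  choose zq hzq using hqint
  -- fix the sign
  obtain ⟨i₁, hi₁⟩ : ∃ i, 0 < u i := by
    rcases Function.ne_iff.1 hune with ⟨i, hi⟩
    exact ⟨i, lt_of_le_of_ne (hu.1 i) (by simpa using (Ne.symm hi))⟩
  have hqu : ∀ i, q i = c₀ * u i := by
    intro i
    rw [← hc₀]
    simp
  rcases lt_or_gt_of_ne hc₀ne with hneg | hpos
  · refine ⟨fun j => -(zq j), -c₀, by linarith, ?_⟩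
    funext i
    have := hzq i
    simp only [Pi.smul_apply, smul_eq_mul]
    push_cast
    rw [← this, hqu i]
    ring
  · refine ⟨zq, c₀, hpos, ?_⟩
    funext i
    simp only [Pi.smul_apply, smul_eq_mul]
    rw [← hzq i, hqu i]

lemma int_to_prim {u : Fin n → ℝ} (hu0 : ∀ i, 0 ≤ u i) (hune : u ≠ 0)
    {z : Fin n → ℤ} {c : ℝ} (hc : 0 < c) (hz : (fun i => ((z i : ℝ))) = c • u) :
    ∃ (w : Fin n → ℕ) (c' : ℝ), 0 < c' ∧ ((fun i => ((w i : ℝ))) = c' • u) ∧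
      Finset.univ.gcd w = 1 := by
  classical
  have hzr : ∀ i, ((z i : ℝ)) = c * u i := by
    intro i
    have := congrFun hz i
    simpa using this
  have hznn : ∀ i, 0 ≤ z i := by
    intro i
    have : (0:ℝ) ≤ ((z i : ℝ)) := by rw [hzr i]; exact mul_nonneg hc.le (hu0 i)
    exact_mod_cast this
  set w₀ : Fin n → ℕ := fun i => (z i).toNat with hw₀
  have hw₀r : ∀ i, ((w₀ i : ℝ)) = c * u i := by
    intro i
    rw [← hzr i]
    rw [hw₀]
    norm_cast
    exact Int.toNat_of_nonneg (hznn i)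
  obtain ⟨i₁, hi₁⟩ : ∃ i, 0 < u i := by
    rcases Function.ne_iff.1 hune with ⟨i, hi⟩
    exact ⟨i, lt_of_le_of_ne (hu0 i) (by simpa using (Ne.symm hi))⟩
  have hw₀i₁ : w₀ i₁ ≠ 0 := by
    intro h
    have := hw₀r i₁
    rw [h] at this
    simp at this
    rcases this with h' | h'
    · exact absurd h' hc.ne'
    · exact absurd h' hi₁.ne'
  set g := Finset.univ.gcd w₀ with hg
  have hgdvd : ∀ i, g ∣ w₀ i := fun i => Finset.gcd_dvd (Finset.mem_univ i)
  have hg0 : g ≠ 0 := fun h => hw₀i₁ ((Finset.gcd_eq_zero_iff.1 h) i₁ (Finset.mem_univ _))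
  have hgR : (0:ℝ) < (g:ℝ) := by exact_mod_cast Nat.pos_of_ne_zero hg0
  refine ⟨fun i => w₀ i / g, c / g, div_pos hc hgR, ?_, ?_⟩
  · funext i
    have hcast : ((w₀ i / g : ℕ) : ℝ) = (w₀ i : ℝ) / (g:ℝ) := by
      rw [Nat.cast_div (hgdvd i) (by exact_mod_cast hg0)]
    simp only [Pi.smul_apply, smul_eq_mul]
    rw [hcast, hw₀r i]
    ring
  · exact Finset.gcd_div_eq_one (Finset.mem_univ i₁) hw₀i₁

end Extract

section Assemble

lemma dval_add_finsets {Ff Fg : Finset (Fin n → ℝ)} (hfne : Ff.Nonempty) (hgne : Fg.Nonempty)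
    {u : Fin n → ℝ} (hu0 : ∀ i, 0 ≤ u i) :
    dval u (orthHull (↑(Ff + Fg) : Set (Fin n → ℝ)))
      = dval u (orthHull (↑Ff : Set (Fin n → ℝ))) + dval u (orthHull (↑Fg : Set (Fin n → ℝ))) := by
  classical
  have hfg : (Ff + Fg).Nonempty := by
    obtain ⟨a, ha⟩ := hfne; obtain ⟨b, hb⟩ := hgne
    exact ⟨a + b, Finset.add_mem_add ha hb⟩
  rw [dval_orthHull hfg hu0, dval_orthHull hfne hu0, dval_orthHull hgne hu0]
  apply le_antisymm
  · obtain ⟨a, ha, hae⟩ := Finset.exists_mem_eq_inf' hfne (fun m => dotp u m)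
    obtain ⟨b, hb, hbe⟩ := Finset.exists_mem_eq_inf' hgne (fun m => dotp u m)
    have := Finset.inf'_le (fun m => dotp u m) (Finset.add_mem_add ha hb)
    rw [dotp_add_right] at this
    rw [hae, hbe]
    exact this
  · apply Finset.le_inf'
    intro x hx
    obtain ⟨a, ha, b, hb, rfl⟩ := Finset.mem_add.1 hx
    rw [dotp_add_right]
    exact add_le_add (Finset.inf'_le _ ha) (Finset.inf'_le _ hb)

/-- Main geometric lemma: from a nonzero lattice direction whose first-meet locus
contains the diagonal point and with `d(w,Γf)=0`, produce a primitive facet normal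
with the same properties. -/
lemma key_lemma (hn : 2 ≤ n)
    {Ff FP : Finset (Fin n → ℝ)} (hfne : Ff.Nonempty) (hPne : FP.Nonempty)
    (hfnn : ∀ m ∈ Ff, ∀ i, (0:ℝ) ≤ m i)
    (hPint : ∀ m ∈ FP, ∀ i, ∃ k : ℕ, m i = (k:ℝ))
    {t₀ : ℝ} (hdiagP : diagv n t₀ ∈ orthHull (↑FP : Set (Fin n → ℝ)))
    {w : Fin n → ℕ} (hw : w ≠ 0)
    (hdf : dval (natVec w) (orthHull (↑Ff : Set (Fin n → ℝ))) = 0)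
    (heq : dotp (natVec w) (diagv n t₀)
      = dval (natVec w) (orthHull (↑FP : Set (Fin n → ℝ)))) :
    ∃ w' : Fin n → ℕ,
      IsPrimFacetNormal (orthHull (↑FP : Set (Fin n → ℝ))) w' ∧
      diagv n t₀ ∈ fmeet (natVec w') (orthHull (↑FP : Set (Fin n → ℝ))) ∧
      dval (natVec w') (orthHull (↑Ff : Set (Fin n → ℝ))) = 0 := by
  classical
  set u₀ := natVec w with hu₀def
  have hu₀0 : ∀ i, 0 ≤ u₀ i := fun i => Nat.cast_nonneg _
  have hu₀ne : u₀ ≠ 0 := by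
    rcases Function.ne_iff.1 hw with ⟨i, hi⟩
    intro h
    apply hi
    have := congrFun h i
    simpa [hu₀def, natVec] using this
  obtain ⟨m₀, hm₀F, hm₀val⟩ := dval_attain hfne hu₀0
  rw [hdf] at hm₀val
  set Zp : Fin n → Prop := fun i => m₀ i ≠ 0 with hZp
  have hu₀good : Good FP t₀ Zp u₀ := by
    refine ⟨hu₀0, hu₀ne, ?_, ?_⟩
    · intro m hm
      have h1 : dval u₀ (orthHull (↑FP : Set (Fin n → ℝ))) ≤ dotp u₀ m :=
        dval_le_of_mem hPne hu₀0 (subset_orthHull _ (by exact_mod_cast hm))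
      rw [← heq, show diagv n t₀ = (fun _ : Fin n => t₀) from rfl, dotp_const_right] at h1
      exact h1
    · intro i hmi
      have := dotp_coord_zero hu₀0 (hfnn m₀ hm₀F) hm₀val i
      rcases mul_eq_zero.1 this with h | h
      · exact h
      · exact absurd h hmi
  -- climb to a facet
  obtain ⟨u', hu'good, hu'rk⟩ := climb (F := FP) (t₀ := t₀) (Zp := Zp) hn (n - 1) u₀ hu₀good
    (by omega)
  -- extract a primitive integer normal
  obtain ⟨z, c, hc, hzc⟩ := exists_int_normal hn hPne hPint hdiagP hu'good hu'rk
  obtain ⟨w', c', hc', hw'c, hgcd⟩ := int_to_prim hu'good.1 hu'good.2.1 hc hzc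
  have hvec : natVec w' = c' • u' := hw'c
  have hfm : fmeet (natVec w') (orthHull (↑FP : Set (Fin n → ℝ)))
      = fmeet u' (orthHull (↑FP : Set (Fin n → ℝ))) := by
    rw [hvec]; exact fmeet_smul u' hc' _
  have hdiagmem : diagv n t₀ ∈ fmeet (natVec w') (orthHull (↑FP : Set (Fin n → ℝ))) := by
    rw [hfm]; exact good_diag_mem hPne hdiagP hu'good
  refine ⟨w', ⟨?_, hgcd, ?_⟩, hdiagmem, ?_⟩
  · -- w' ≠ 0
    intro h0
    apply hu'good.2.1
    have : natVec w' = 0 := by funext i; simp [natVec, congrFun h0 i]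
    rw [hvec] at this
    have := smul_eq_zero.1 this
    rcases this with h | h
    · exact absurd h hc'.ne'
    · exact h
  · -- facet dimension
    rw [direction_affineSpan, hfm, vectorSpan_fmeet_eq hPne hdiagP hu'good, hu'rk]
  · -- d(w', Γf) = 0
    apply le_antisymm
    · have hm₀mem : m₀ ∈ orthHull (↑Ff : Set (Fin n → ℝ)) :=
        subset_orthHull _ (by exact_mod_cast hm₀F)
      have h1 := dval_le_of_mem hfne (fun i => Nat.cast_nonneg _) (u := natVec w') hm₀mem
      have h2 : dotp (natVec w') m₀ = 0 := by
        rw [hvec, dotp_smul_left]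
        have : dotp u' m₀ = 0 := by
          apply Finset.sum_eq_zero
          intro i _
          by_cases hm : m₀ i = 0
          · rw [hm, mul_zero]
          · rw [hu'good.2.2.2 i hm, zero_mul]
        rw [this, mul_zero]
      rw [h2] at h1
      exact h1
    · exact dval_nonneg hfne hfnn (fun i => Nat.cast_nonneg _)

end Assemble

end NPaux

open NPaux in
/-- if `d(w,Γ(f)) ≠ 0` and `d(w,Γ(g)) ≠ 0` for every `w ∈ D(t₀)`, then
no `w ∈ T₊` realizes the value `1/t₀` and no `w ∈ T₋` realizes `−1/t₀`; i.e.
`±1/t₀` are not candidate poles coming from the cones. -/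
theorem pm_inv_t0_not_candidate_pole
    (hn : 2 ≤ n)
    (Γf Γg : Set (Fin n → ℝ))
    (hΓf : IsNewtonPolyhedron Γf) (hΓg : IsNewtonPolyhedron Γg)
    (t₀ : ℝ) (ht₀ : 0 < t₀)
    (hdiag : (fun _ : Fin n => t₀) ∈ frontier (Γf + Γg))
    (hD : ∀ w ∈ Dset (Γf + Γg) (fun _ => t₀),
      dval (natVec w) Γf ≠ 0 ∧ dval (natVec w) Γg ≠ 0) :
    (¬ ∃ w : Fin n → ℕ, w ≠ 0 ∧ 0 < dval (natVec w) Γg - dval (natVec w) Γf ∧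
        sigmaS (natVec w) / (dval (natVec w) Γg - dval (natVec w) Γf) = 1 / t₀) ∧
    (¬ ∃ w : Fin n → ℕ, w ≠ 0 ∧ 0 < dval (natVec w) Γf - dval (natVec w) Γg ∧
        -(sigmaS (natVec w)) / (dval (natVec w) Γf - dval (natVec w) Γg) = -(1 / t₀)) := by
  classical
  obtain ⟨Sf, hSfne, hΓfeq⟩ := hΓf
  obtain ⟨Sg, hSgne, hΓgeq⟩ := hΓg
  set Ff : Finset (Fin n → ℝ) := Sf.image natVec with hFf
  set Fg : Finset (Fin n → ℝ) := Sg.image natVec with hFg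
  have hfne : Ff.Nonempty := hSfne.image _
  have hgne : Fg.Nonempty := hSgne.image _
  have hΓf' : Γf = orthHull (↑Ff : Set (Fin n → ℝ)) := by
    rw [hΓfeq, hFf, Finset.coe_image]; rfl
  have hΓg' : Γg = orthHull (↑Fg : Set (Fin n → ℝ)) := by
    rw [hΓgeq, hFg, Finset.coe_image]; rfl
  have hfnn : ∀ m ∈ Ff, ∀ i, (0:ℝ) ≤ m i := by
    intro m hm i
    obtain ⟨m₀, _, rfl⟩ := Finset.mem_image.1 hm
    exact Nat.cast_nonneg _
  have hgnn : ∀ m ∈ Fg, ∀ i, (0:ℝ) ≤ m i := by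
    intro m hm i
    obtain ⟨m₀, _, rfl⟩ := Finset.mem_image.1 hm
    exact Nat.cast_nonneg _
  have hPint : ∀ m ∈ Ff + Fg, ∀ i, ∃ k : ℕ, m i = (k:ℝ) := by
    intro m hm i
    obtain ⟨a, ha, b, hb, rfl⟩ := Finset.mem_add.1 hm
    obtain ⟨a₀, _, rfl⟩ := Finset.mem_image.1 ha
    obtain ⟨b₀, _, rfl⟩ := Finset.mem_image.1 hb
    exact ⟨a₀ i + b₀ i, by simp [natVec]⟩
  have hPint' : ∀ m ∈ Fg + Ff, ∀ i, ∃ k : ℕ, m i = (k:ℝ) := by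
    intro m hm i
    apply hPint
    rwa [add_comm Fg Ff] at hm
  have hPne : (Ff + Fg).Nonempty := by
    obtain ⟨a, ha⟩ := hfne; obtain ⟨b, hb⟩ := hgne
    exact ⟨a + b, Finset.add_mem_add ha hb⟩
  have hPne' : (Fg + Ff).Nonempty := by rwa [add_comm Fg Ff]
  have hPeq : Γf + Γg = orthHull (↑(Ff + Fg) : Set (Fin n → ℝ)) := by
    rw [hΓf', hΓg', orthHull_add, Finset.coe_add]
  have hPeq' : Γf + Γg = orthHull (↑(Fg + Ff) : Set (Fin n → ℝ)) := by
    rw [hPeq, add_comm Ff Fg]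
  have hPclosed : IsClosed (Γf + Γg) := by
    rw [hPeq]; exact isClosed_orthHull _
  have hdiagmemP : (fun _ : Fin n => t₀) ∈ Γf + Γg := by
    have h1 := frontier_subset_closure (s := Γf + Γg) hdiag
    rwa [hPclosed.closure_eq] at h1
  have hdiagP : diagv n t₀ ∈ orthHull (↑(Ff + Fg) : Set (Fin n → ℝ)) := by
    rw [← hPeq]; exact hdiagmemP
  have hdiagP' : diagv n t₀ ∈ orthHull (↑(Fg + Ff) : Set (Fin n → ℝ)) := by
    rw [← hPeq']; exact hdiagmemP
  constructor
  · rintro ⟨w, hw0, hpos, heqq⟩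
    set u := natVec w with hu
    have hu0 : ∀ i, 0 ≤ u i := fun i => Nat.cast_nonneg _
    set df := dval u Γf with hdf
    set dg := dval u Γg with hdg
    have hσt : sigmaS u * t₀ = dg - df := by
      have h := (div_eq_div_iff (ne_of_gt hpos) (ne_of_gt ht₀)).1 heqq
      linarith
    have hadd : dval u (Γf + Γg) = df + dg := by
      rw [hPeq, hdf, hdg, hΓf', hΓg']
      exact dval_add_finsets hfne hgne hu0
    have hle : dval u (Γf + Γg) ≤ t₀ * sigmaS u := by
      have h1 := dval_le_of_mem hPne hu0 hdiagP
      rw [show diagv n t₀ = (fun _ : Fin n => t₀) from rfl, dotp_const_right] at h1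
      rw [hPeq]
      exact h1
    have hdfnn : 0 ≤ df := by rw [hdf, hΓf']; exact dval_nonneg hfne hfnn hu0
    have hdgnn : 0 ≤ dg := by rw [hdg, hΓg']; exact dval_nonneg hgne hgnn hu0
    have hdf0 : df = 0 := by linarith
    have heq2 : dotp u (diagv n t₀) = dval u (orthHull (↑(Ff + Fg) : Set (Fin n → ℝ))) := by
      rw [show diagv n t₀ = (fun _ : Fin n => t₀) from rfl, dotp_const_right, ← hPeq, hadd, hdf0]
      linarith
    have hdf0' : dval u (orthHull (↑Ff : Set (Fin n → ℝ))) = 0 := by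
      rw [← hΓf', ← hdf]; exact hdf0
    obtain ⟨w', hprim, hdiagfm, hdf'⟩ :=
      key_lemma hn hfne hPne hfnn hPint hdiagP hw0 hdf0' heq2
    have hDmem : w' ∈ Dset (Γf + Γg) (fun _ => t₀) := by
      constructor
      · rw [hPeq]; exact hprim
      · apply Set.sInter_subset_of_mem
        refine ⟨?_, natVec w', fun i => Nat.cast_nonneg _, rfl⟩
        rw [hPeq]
        exact hdiagfm
    have hne0 := (hD w' hDmem).1
    rw [hΓf'] at hne0
    exact hne0 hdf'
  · rintro ⟨w, hw0, hpos, heqq⟩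
    set u := natVec w with hu
    have hu0 : ∀ i, 0 ≤ u i := fun i => Nat.cast_nonneg _
    set df := dval u Γf with hdf
    set dg := dval u Γg with hdg
    have heqq' : sigmaS u / (df - dg) = 1 / t₀ := by
      have h : -(sigmaS u / (df - dg)) = -(1 / t₀) := by
        rw [← neg_div]; exact heqq
      linarith [h]
    have hσt : sigmaS u * t₀ = df - dg := by
      have h := (div_eq_div_iff (ne_of_gt hpos) (ne_of_gt ht₀)).1 heqq'
      linarith
    have hadd : dval u (Γf + Γg) = dg + df := by
      rw [hPeq', hdf, hdg, hΓf', hΓg']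
      exact dval_add_finsets hgne hfne hu0
    have hle : dval u (Γf + Γg) ≤ t₀ * sigmaS u := by
      have h1 := dval_le_of_mem hPne' hu0 hdiagP'
      rw [show diagv n t₀ = (fun _ : Fin n => t₀) from rfl, dotp_const_right] at h1
      rw [hPeq']
      exact h1
    have hdfnn : 0 ≤ df := by rw [hdf, hΓf']; exact dval_nonneg hfne hfnn hu0
    have hdgnn : 0 ≤ dg := by rw [hdg, hΓg']; exact dval_nonneg hgne hgnn hu0
    have hdg0 : dg = 0 := by linarith
    have heq2 : dotp u (diagv n t₀) = dval u (orthHull (↑(Fg + Ff) : Set (Fin n → ℝ))) := by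
      rw [show diagv n t₀ = (fun _ : Fin n => t₀) from rfl, dotp_const_right, ← hPeq', hadd, hdg0]
      linarith
    have hdg0' : dval u (orthHull (↑Fg : Set (Fin n → ℝ))) = 0 := by
      rw [← hΓg', ← hdg]; exact hdg0
    obtain ⟨w', hprim, hdiagfm, hdg'⟩ :=
      key_lemma hn hgne hPne' hgnn hPint' hdiagP' hw0 hdg0' heq2
    have hDmem : w' ∈ Dset (Γf + Γg) (fun _ => t₀) := by
      constructor
      · rw [hPeq']; exact hprim
      · apply Set.sInter_subset_of_mem
        refine ⟨?_, natVec w', fun i => Nat.cast_nonneg _, rfl⟩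
        rw [hPeq']
        exact hdiagfm
    have hne0 := (hD w' hDmem).2
    rw [hΓg'] at hne0
    exact hne0 hdg'
end
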